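/- Let λ₁,…,λ_N and z₁,…,z_N be complex numbers with all relevant sinh-factors nonzero, and define the N×N matrix A by A_{jk} = [∏_{a=1}^N sinh(z_j − λ_a) / ∏_{a≠j} sinh(z_j − z_a)] · coth(z_j − λ_k) for k < N, and A_{jN} = ∏_{a=1}^N sinh(z_j − λ_a) / ∏_{a≠j} sinh(z_j − z_a). Then det_N A = [∏_{a=1}^N sinh(z_a − λ_N) / ∏_{a=1}^{N-1} sinh(λ_a − λ_N)] · ∏_{a>b} sinh(λ_a − λ_b)/sinh(z_a − z_b). -/

import Mathlib

open Matrix Finset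

lemma prodPairs_castSucc {M : Type*} [CommMonoid M] (n : ℕ) (f : Fin (n+1) → Fin (n+1) → M) :
    ∏ a, ∏ b ∈ Iio a, f a b =
      (∏ a : Fin n, ∏ b ∈ Iio a, f a.castSucc b.castSucc) *
        ∏ b : Fin n, f (Fin.last n) b.castSucc := by
  rw [Fin.prod_univ_castSucc]
  congr 1
  · exact Finset.prod_congr rfl fun a _ => by rw [Fin.Iio_castSucc, Finset.prod_map]; rfl
  · rw [Fin.Iio_last_eq_map, Finset.prod_map]; rfl

lemma prod_erase_last {M : Type*} [CommMonoid M] (n : ℕ) (g : Fin (n+1) → M) :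
    ∏ a ∈ Finset.univ.erase (Fin.last n), g a = ∏ b : Fin n, g b.castSucc := by
  have h : Finset.univ.erase (Fin.last n) = Iio (Fin.last n) := by
    ext a
    simp only [Finset.mem_erase, Finset.mem_univ, and_true, Finset.mem_Iio]
    exact Fin.lt_last_iff_ne_last.symm
  rw [h, Fin.Iio_last_eq_map, Finset.prod_map]; rfl

lemma erase_castSucc (n : ℕ) (j : Fin n) :
    (Finset.univ.erase j.castSucc : Finset (Fin (n+1))) =
      insert (Fin.last n) ((Finset.univ.erase j).map Fin.castSuccEmb) := by
  ext a
  simp only [Finset.mem_erase, Finset.mem_univ, and_true, Finset.mem_insert, Finset.mem_map,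
    Fin.castSuccEmb_apply]
  constructor
  · intro ha
    rcases eq_or_ne a (Fin.last n) with h | h
    · exact Or.inl h
    · obtain ⟨b, rfl⟩ := Fin.exists_castSucc_eq.2 h
      exact Or.inr ⟨b, fun hb => ha (by rw [hb]), rfl⟩
  · rintro (rfl | ⟨b, hb, rfl⟩)
    · exact (Fin.castSucc_lt_last j).ne'
    · exact fun h => hb (Fin.castSucc_injective _ h)

lemma prod_erase_castSucc {M : Type*} [CommMonoid M] (n : ℕ) (j : Fin n) (g : Fin (n+1) → M) :
    ∏ a ∈ Finset.univ.erase j.castSucc, g a =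
      g (Fin.last n) * ∏ b ∈ Finset.univ.erase j, g b.castSucc := by
  rw [erase_castSucc, Finset.prod_insert, Finset.prod_map]
  · rfl
  · simp only [Finset.mem_map, Fin.castSuccEmb_apply]
    rintro ⟨b, _, hb⟩
    exact (Fin.castSucc_lt_last b).ne hb

lemma prod_erase_pairs : ∀ (m : ℕ) (f : Fin m → Fin m → ℂ),
    ∏ j, ∏ a ∈ Finset.univ.erase j, f j a = ∏ a, ∏ b ∈ Iio a, (f a b * f b a) := by
  intro m
  induction m with
  | zero => intro f; simp
  | succ n ih =>
    intro f
    rw [Fin.prod_univ_castSucc, prod_erase_last]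
    simp only [prod_erase_castSucc]
    rw [Finset.prod_mul_distrib, ih (fun j a => f j.castSucc a.castSucc),
      prodPairs_castSucc n (fun a b => f a b * f b a), Finset.prod_mul_distrib]
    ring

lemma prodPairs_mul_self : ∀ (m : ℕ) (w : Fin m → ℂ),
    (∏ a, ∏ b ∈ Iio a, (w a * w b)) * ∏ a, w a = (∏ a, w a) ^ m := by
  intro m
  induction m with
  | zero => intro w; simp
  | succ n ih =>
    intro w
    rw [prodPairs_castSucc, Fin.prod_univ_castSucc, Finset.prod_mul_distrib,
      Finset.prod_const]
    have hP := ih (fun b => w b.castSucc)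
    set P := ∏ a : Fin n, ∏ b ∈ Iio a, (w a.castSucc * w b.castSucc) with hPdef
    set Wc := ∏ b : Fin n, w b.castSucc with hWc
    set c := w (Fin.last n) with hc
    have hcard : (Finset.univ : Finset (Fin n)).card = n := by simp
    rw [hcard]
    calc P * (c ^ n * Wc) * (Wc * c) = P * Wc * (c ^ n * c) * Wc := by ring
      _ = Wc ^ n * (c ^ n * c) * Wc := by rw [hP]
      _ = (Wc * c) ^ (n + 1) := by ring

lemma prod_prod_mul (m : ℕ) (g h : Fin m → ℂ) :
    ∏ j, ∏ k, (g j * h k) = (∏ j, g j) ^ m * (∏ k, h k) ^ m := by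
  have : ∀ j, ∏ k, (g j * h k) = g j ^ m * ∏ k, h k := by
    intro j
    rw [Finset.prod_mul_distrib, Finset.prod_const]
    simp
  simp_rw [this]
  rw [Finset.prod_mul_distrib, Finset.prod_pow, Finset.prod_const]
  simp

lemma exp2_sub (x y : ℂ) :
    Complex.exp (2*x) - Complex.exp (2*y) =
      2 * Complex.exp x * Complex.exp y * Complex.sinh (x - y) := by
  have hs : Complex.sinh (x - y) = (Complex.exp (x-y) - Complex.exp (-(x-y)))/2 := rfl
  have h1 : Complex.exp x * Complex.exp y * Complex.exp (x - y) = Complex.exp (2*x) := by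
    rw [← Complex.exp_add, ← Complex.exp_add]; congr 1; ring
  have h2 : Complex.exp x * Complex.exp y * Complex.exp (-(x - y)) = Complex.exp (2*y) := by
    rw [← Complex.exp_add, ← Complex.exp_add]; congr 1; ring
  rw [hs]
  linear_combination h2 - h1

lemma coth_sub_identity (a b : ℂ) (ha : Complex.sinh a ≠ 0) (hb : Complex.sinh b ≠ 0) :
    Complex.cosh a / Complex.sinh a =
      Complex.sinh (b - a) * ((Complex.sinh a)⁻¹ * (Complex.sinh b)⁻¹) +
        Complex.cosh b / Complex.sinh b := by
  rw [Complex.sinh_sub]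
  field_simp
  ring

lemma det_eq_of_forall_col_eq_smul_add_const' {m : Type*} [DecidableEq m] [Fintype m]
    {A B : Matrix m m ℂ} (c : m → ℂ) (k : m) (hk : c k = 0)
    (h : ∀ i j, A i j = B i j + c j * B i k) : A.det = B.det := by
  rw [← Matrix.det_transpose A, ← Matrix.det_transpose B]
  exact Matrix.det_eq_of_forall_row_eq_smul_add_const c k hk (fun i j => h j i)

lemma cauchy_det : ∀ (m : ℕ) (u v : Fin m → ℂ), (∀ j k, u j - v k ≠ 0) →
    Matrix.det (Matrix.of fun j k => (u j - v k)⁻¹) =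
      (∏ a, ∏ b ∈ Iio a, ((u a - u b) * (v b - v a))) / ∏ j, ∏ k, (u j - v k) := by
  intro m
  induction m with
  | zero => intro u v _; simp
  | succ n ih =>
    intro u v h
    set N := Fin.last n with hN
    -- Step A : row operation
    have stepA : Matrix.det (Matrix.of fun j k : Fin (n+1) => (u j - v k)⁻¹) =
        Matrix.det (Matrix.of fun j k : Fin (n+1) =>
          if j = N then (u N - v k)⁻¹
          else (u N - u j) * ((u j - v k)⁻¹ * (u N - v k)⁻¹)) := by
      apply Matrix.det_eq_of_forall_row_eq_smul_add_const
        (fun j => if j = N then 0 else 1) N (by simp)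
      intro i j
      by_cases hi : i = N
      · subst hi; simp
      · simp only [Matrix.of_apply, if_neg hi, one_mul, if_pos rfl, if_true]
        have h1 := h i j; have h2 := h N j
        field_simp
        ring
    -- Step B : factor rows and columns
    have stepB : Matrix.det (Matrix.of fun j k : Fin (n+1) =>
          if j = N then (u N - v k)⁻¹
          else (u N - u j) * ((u j - v k)⁻¹ * (u N - v k)⁻¹)) =
        (∏ j, (if j = N then 1 else u N - u j)) *
          ((∏ k, (u N - v k)⁻¹) *
            Matrix.det (Matrix.of fun j k : Fin (n+1) =>
              if j = N then 1 else (u j - v k)⁻¹)) := by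
      have e1 : (Matrix.of fun j k : Fin (n+1) =>
          if j = N then (u N - v k)⁻¹
          else (u N - u j) * ((u j - v k)⁻¹ * (u N - v k)⁻¹)) =
          Matrix.of (fun j k => (if j = N then 1 else u N - u j) *
            (Matrix.of (fun j k : Fin (n+1) => (u N - v k)⁻¹ *
              (Matrix.of (fun j k : Fin (n+1) => if j = N then 1 else (u j - v k)⁻¹)) j k) j k)) := by
        ext j k
        simp only [Matrix.of_apply]
        by_cases hj : j = N
        · simp [hj]
        · simp only [if_neg hj]; ring
      rw [e1, Matrix.det_mul_column, Matrix.det_mul_row]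
    -- Step C : column operation
    have stepC : Matrix.det (Matrix.of fun j k : Fin (n+1) =>
          if j = N then 1 else (u j - v k)⁻¹) =
        Matrix.det (Matrix.of fun j k : Fin (n+1) =>
          if k = N then (if j = N then 1 else (u j - v N)⁻¹)
          else (if j = N then 0 else (v k - v N) * ((u j - v k)⁻¹ * (u j - v N)⁻¹))) := by
      apply det_eq_of_forall_col_eq_smul_add_const' (fun k => if k = N then 0 else 1) N (by simp)
      intro i j
      simp only [Matrix.of_apply, if_pos rfl]
      by_cases hj : j = N
      · simp [hj]
      · simp only [if_neg hj, one_mul]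
        by_cases hi : i = N
        · simp [hi]
        · simp only [if_neg hi, if_true]
          have h1 := h i j; have h2 := h i N
          field_simp
          ring
    -- Step D : expand along the last row
    have stepD : Matrix.det (Matrix.of fun j k : Fin (n+1) =>
          if k = N then (if j = N then 1 else (u j - v N)⁻¹)
          else (if j = N then 0 else (v k - v N) * ((u j - v k)⁻¹ * (u j - v N)⁻¹))) =
        Matrix.det (Matrix.of fun j k : Fin n =>
          (v k.castSucc - v N) * ((u j.castSucc - v k.castSucc)⁻¹ * (u j.castSucc - v N)⁻¹)) := by
      rw [Matrix.det_succ_row _ N]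
      rw [Finset.sum_eq_single N]
      · simp only [Matrix.of_apply, if_pos rfl]
        have hpow : ((-1 : ℂ)) ^ ((N : ℕ) + (N : ℕ)) = 1 := Even.neg_one_pow ⟨(N : ℕ), rfl⟩
        rw [hpow]
        simp only [if_true, one_mul]
        congr 1
        ext j k
        have hj : (N.succAbove j : Fin (n+1)) = j.castSucc := by
          rw [hN, Fin.succAbove_last]
        have hk : (N.succAbove k : Fin (n+1)) = k.castSucc := by
          rw [hN, Fin.succAbove_last]
        simp only [Matrix.submatrix_apply, hj, hk, Matrix.of_apply, hN, Fin.succAbove_last,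
          if_neg (Fin.castSucc_lt_last k).ne, if_neg (Fin.castSucc_lt_last j).ne]
      · intro b _ hb
        simp [if_neg hb]
      · simp
    -- Step E : factor the small matrix
    have stepE : Matrix.det (Matrix.of fun j k : Fin n =>
          (v k.castSucc - v N) * ((u j.castSucc - v k.castSucc)⁻¹ * (u j.castSucc - v N)⁻¹)) =
        (∏ k : Fin n, (v k.castSucc - v N)) *
          ((∏ j : Fin n, (u j.castSucc - v N)⁻¹) *
            Matrix.det (Matrix.of fun j k : Fin n => (u j.castSucc - v k.castSucc)⁻¹)) := by
      have e2 : (Matrix.of fun j k : Fin n =>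
          (v k.castSucc - v N) * ((u j.castSucc - v k.castSucc)⁻¹ * (u j.castSucc - v N)⁻¹)) =
          Matrix.of (fun j k => (v k.castSucc - v N) *
            (Matrix.of (fun j k : Fin n => (u j.castSucc - v N)⁻¹ *
              (Matrix.of (fun j k : Fin n => (u j.castSucc - v k.castSucc)⁻¹)) j k) j k)) := by
        ext j k
        simp only [Matrix.of_apply]
        ring
      rw [e2, Matrix.det_mul_row, Matrix.det_mul_column]
    have ihsmall := ih (fun j => u j.castSucc) (fun k => v k.castSucc)
      (fun j k => h j.castSucc k.castSucc)
    rw [stepA, stepB, stepC, stepD, stepE, ihsmall]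
    -- final bookkeeping
    have hr : (∏ j : Fin (n+1), if j = N then (1:ℂ) else u N - u j) =
        ∏ j : Fin n, (u N - u j.castSucc) := by
      rw [Fin.prod_univ_castSucc, if_pos hN.symm, mul_one]
      exact Finset.prod_congr rfl fun j _ => if_neg ((Fin.castSucc_lt_last j).ne)
    have hs : (∏ k : Fin (n+1), (u N - v k)⁻¹) =
        ((∏ k : Fin n, (u N - v k.castSucc)) * (u N - v N))⁻¹ := by
      rw [Finset.prod_inv_distrib]
      congr 1
      rw [Fin.prod_univ_castSucc, ← hN]
    have hr' : (∏ j : Fin n, (u j.castSucc - v N)⁻¹) =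
        (∏ j : Fin n, (u j.castSucc - v N))⁻¹ := Finset.prod_inv_distrib _
    have hP : (∏ a : Fin (n+1), ∏ b ∈ Iio a, ((u a - u b) * (v b - v a))) =
        (∏ a : Fin n, ∏ b ∈ Iio a, ((u a.castSucc - u b.castSucc) * (v b.castSucc - v a.castSucc))) *
          ((∏ b : Fin n, (u N - u b.castSucc)) * (∏ b : Fin n, (v b.castSucc - v N))) := by
      rw [prodPairs_castSucc n (fun a b => (u a - u b) * (v b - v a)), ← hN,
        Finset.prod_mul_distrib]
    have hQ : (∏ j : Fin (n+1), ∏ k : Fin (n+1), (u j - v k)) =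
        ((∏ j : Fin n, ∏ k : Fin n, (u j.castSucc - v k.castSucc)) *
            (∏ j : Fin n, (u j.castSucc - v N))) *
          ((∏ k : Fin n, (u N - v k.castSucc)) * (u N - v N)) := by
      rw [Fin.prod_univ_castSucc, ← hN]
      congr 1
      · rw [← Finset.prod_mul_distrib]
        exact Finset.prod_congr rfl fun j _ => by rw [Fin.prod_univ_castSucc, ← hN]
      · rw [Fin.prod_univ_castSucc, ← hN]
    rw [hr, hs, hr', hP, hQ]
    have hQn : (∏ j : Fin n, ∏ k : Fin n, (u j.castSucc - v k.castSucc)) ≠ 0 :=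
      Finset.prod_ne_zero_iff.mpr fun j _ =>
        Finset.prod_ne_zero_iff.mpr fun k _ => h j.castSucc k.castSucc
    have hC1 : (∏ j : Fin n, (u j.castSucc - v N)) ≠ 0 :=
      Finset.prod_ne_zero_iff.mpr fun j _ => h j.castSucc N
    have hC2 : (∏ k : Fin n, (u N - v k.castSucc)) ≠ 0 :=
      Finset.prod_ne_zero_iff.mpr fun k _ => h N k.castSucc
    have hc3 : u N - v N ≠ 0 := h N N
    field_simp

lemma sinh_cauchy_det (m : ℕ) (z lam : Fin m → ℂ)
    (h : ∀ j k, Complex.sinh (z j - lam k) ≠ 0) :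
    Matrix.det (Matrix.of fun j k => (Complex.sinh (z j - lam k))⁻¹) =
      (∏ a, ∏ b ∈ Iio a, (Complex.sinh (z a - z b) * Complex.sinh (lam b - lam a))) /
        ∏ j, ∏ k, Complex.sinh (z j - lam k) := by
  set u : Fin m → ℂ := fun j => Complex.exp (2 * z j) with hu
  set v : Fin m → ℂ := fun k => Complex.exp (2 * lam k) with hv
  have key : ∀ x y : Fin m → ℂ, ∀ j k, Complex.exp (2 * x j) - Complex.exp (2 * y k) =
      2 * Complex.exp (x j) * Complex.exp (y k) * Complex.sinh (x j - y k) :=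
    fun x y j k => exp2_sub _ _
  have h' : ∀ j k, u j - v k ≠ 0 := by
    intro j k
    rw [hu, hv]
    simp only
    rw [key z lam j k]
    exact mul_ne_zero (mul_ne_zero (mul_ne_zero two_ne_zero (Complex.exp_ne_zero _))
      (Complex.exp_ne_zero _)) (h j k)
  have entry : ∀ j k, (Complex.sinh (z j - lam k))⁻¹ =
      (2 * Complex.exp (z j)) * (Complex.exp (lam k) * (u j - v k)⁻¹) := by
    intro j k
    have hk := key z lam j k
    have h2 : u j - v k = 2 * Complex.exp (z j) * Complex.exp (lam k) *
        Complex.sinh (z j - lam k) := hk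
    rw [h2]
    rw [mul_inv, mul_inv, mul_inv]
    field_simp [h j k]
  have mateq : (Matrix.of fun j k => (Complex.sinh (z j - lam k))⁻¹) =
      Matrix.of (fun j k => (2 * Complex.exp (z j)) *
        (Matrix.of (fun j k : Fin m => Complex.exp (lam k) *
          (Matrix.of (fun j k : Fin m => (u j - v k)⁻¹)) j k) j k)) := by
    ext j k
    simp only [Matrix.of_apply]
    exact entry j k
  rw [mateq, Matrix.det_mul_column, Matrix.det_mul_row, cauchy_det m u v h']
  -- rewrite numerator and denominator
  set w : Fin m → ℂ := fun x => 2 * Complex.exp (z x) * Complex.exp (lam x) with hw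
  have hPr : (∏ a, ∏ b ∈ Iio a, ((u a - u b) * (v b - v a))) =
      (∏ a, ∏ b ∈ Iio a, (w a * w b)) *
        ∏ a, ∏ b ∈ Iio a, (Complex.sinh (z a - z b) * Complex.sinh (lam b - lam a)) := by
    rw [← Finset.prod_mul_distrib]
    refine Finset.prod_congr rfl fun a _ => ?_
    rw [← Finset.prod_mul_distrib]
    refine Finset.prod_congr rfl fun b _ => ?_
    rw [show u a - u b = 2 * Complex.exp (z a) * Complex.exp (z b) *
        Complex.sinh (z a - z b) from key z z a b,
      show v b - v a = 2 * Complex.exp (lam b) * Complex.exp (lam a) *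
        Complex.sinh (lam b - lam a) from key lam lam b a, hw]
    ring
  have hQr : (∏ j, ∏ k, (u j - v k)) =
      ((∏ j, (2 * Complex.exp (z j))) ^ m * (∏ k, Complex.exp (lam k)) ^ m) *
        ∏ j, ∏ k, Complex.sinh (z j - lam k) := by
    rw [← prod_prod_mul m (fun j => 2 * Complex.exp (z j)) (fun k => Complex.exp (lam k)),
      ← Finset.prod_mul_distrib]
    refine Finset.prod_congr rfl fun j _ => ?_
    rw [← Finset.prod_mul_distrib]
    refine Finset.prod_congr rfl fun k _ => ?_
    rw [show u j - v k = 2 * Complex.exp (z j) * Complex.exp (lam k) *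
        Complex.sinh (z j - lam k) from key z lam j k]
  rw [hPr, hQr]
  have hwprod : (∏ x, w x) = (∏ j, (2 * Complex.exp (z j))) * ∏ k, Complex.exp (lam k) := by
    rw [← Finset.prod_mul_distrib]
  have hW := prodPairs_mul_self m w
  set A := ∏ j, (2 * Complex.exp (z j)) with hA
  set B := ∏ k, Complex.exp (lam k) with hB
  have hAne : A ≠ 0 := Finset.prod_ne_zero_iff.mpr fun j _ =>
    mul_ne_zero two_ne_zero (Complex.exp_ne_zero _)
  have hBne : B ≠ 0 := Finset.prod_ne_zero_iff.mpr fun k _ => Complex.exp_ne_zero _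
  have hPWne : (∏ a, ∏ b ∈ Iio a, (w a * w b)) ≠ 0 :=
    Finset.prod_ne_zero_iff.mpr fun a _ => Finset.prod_ne_zero_iff.mpr fun b _ =>
      mul_ne_zero (mul_ne_zero (mul_ne_zero two_ne_zero (Complex.exp_ne_zero _))
        (Complex.exp_ne_zero _))
        (mul_ne_zero (mul_ne_zero two_ne_zero (Complex.exp_ne_zero _)) (Complex.exp_ne_zero _))
  have hQSne : (∏ j, ∏ k, Complex.sinh (z j - lam k)) ≠ 0 :=
    Finset.prod_ne_zero_iff.mpr fun j _ => Finset.prod_ne_zero_iff.mpr fun k _ => h j k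
  have hkey : A ^ m * B ^ m = (∏ a, ∏ b ∈ Iio a, (w a * w b)) * (A * B) := by
    rw [← mul_pow, ← hwprod, ← hW, hwprod]
  rw [hkey]
  field_simp
  try ring

/-- Determinant of the auxiliary matrix `A` from the proof of the
Cauchy-extraction proposition. -/
theorem det_aux_matrix_A (n : ℕ) (lam z : Fin (n + 1) → ℂ)
    (hlam : ∀ a b, a ≠ b → Complex.sinh (lam a - lam b) ≠ 0)
    (hz : ∀ a b, a ≠ b → Complex.sinh (z a - z b) ≠ 0)
    (hzlam : ∀ j k, Complex.sinh (z j - lam k) ≠ 0) :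
    Matrix.det (Matrix.of fun j k : Fin (n + 1) =>
      ((∏ a, Complex.sinh (z j - lam a)) /
          ∏ a ∈ Finset.univ.erase j, Complex.sinh (z j - z a)) *
        (if k = Fin.last n then 1
          else Complex.cosh (z j - lam k) / Complex.sinh (z j - lam k))) =
      ((∏ a, Complex.sinh (z a - lam (Fin.last n))) /
          ∏ a ∈ Finset.univ.erase (Fin.last n),
            Complex.sinh (lam a - lam (Fin.last n))) *
        ∏ a : Fin (n + 1), ∏ b ∈ Finset.Iio a,
          (Complex.sinh (lam a - lam b) / Complex.sinh (z a - z b)) := by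
  set N := Fin.last n with hN
  set C : Fin (n+1) → ℂ := fun j => (∏ a, Complex.sinh (z j - lam a)) /
      ∏ a ∈ Finset.univ.erase j, Complex.sinh (z j - z a) with hC
  -- Step 0 : pull out the row prefactors
  have step0 : Matrix.det (Matrix.of fun j k : Fin (n + 1) =>
        C j * (if k = N then 1
          else Complex.cosh (z j - lam k) / Complex.sinh (z j - lam k))) =
      (∏ j, C j) * Matrix.det (Matrix.of fun j k : Fin (n + 1) =>
        (if k = N then 1
          else Complex.cosh (z j - lam k) / Complex.sinh (z j - lam k))) := by
    exact Matrix.det_mul_column C _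
  -- Step 1 : row operation using the coth subtraction identity
  have step1 : Matrix.det (Matrix.of fun j k : Fin (n + 1) =>
        (if k = N then 1
          else Complex.cosh (z j - lam k) / Complex.sinh (z j - lam k))) =
      Matrix.det (Matrix.of fun j k : Fin (n + 1) =>
        if j = N then (if k = N then 1
          else Complex.cosh (z N - lam k) / Complex.sinh (z N - lam k))
        else (if k = N then 0
          else Complex.sinh (z N - z j) *
            ((Complex.sinh (z j - lam k))⁻¹ * (Complex.sinh (z N - lam k))⁻¹))) := by
    apply Matrix.det_eq_of_forall_row_eq_smul_add_const
      (fun j => if j = N then 0 else 1) N (by simp)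
    intro i j
    simp only [Matrix.of_apply, if_pos rfl]
    by_cases hi : i = N
    · simp [hi]
    · simp only [if_neg hi, one_mul]
      by_cases hj : j = N
      · simp [hj]
      · simp only [if_neg hj]
        have harg : z N - z i = (z N - lam j) - (z i - lam j) := by ring
        rw [harg]
        exact coth_sub_identity _ _ (hzlam i j) (hzlam N j)
  -- Step 2 : expand along the last column
  have step2 : Matrix.det (Matrix.of fun j k : Fin (n + 1) =>
        if j = N then (if k = N then 1
          else Complex.cosh (z N - lam k) / Complex.sinh (z N - lam k))
        else (if k = N then 0
          else Complex.sinh (z N - z j) *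
            ((Complex.sinh (z j - lam k))⁻¹ * (Complex.sinh (z N - lam k))⁻¹))) =
      Matrix.det (Matrix.of fun j k : Fin n =>
        Complex.sinh (z N - z j.castSucc) *
          ((Complex.sinh (z j.castSucc - lam k.castSucc))⁻¹ *
            (Complex.sinh (z N - lam k.castSucc))⁻¹)) := by
    rw [Matrix.det_succ_column _ N, Finset.sum_eq_single N]
    · simp only [Matrix.of_apply, if_pos rfl]
      have hpow : ((-1 : ℂ)) ^ ((N : ℕ) + (N : ℕ)) = 1 := Even.neg_one_pow ⟨(N : ℕ), rfl⟩
      rw [hpow]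
      simp only [if_true, one_mul]
      congr 1
      ext j k
      have hj : (N.succAbove j : Fin (n+1)) = j.castSucc := by rw [hN, Fin.succAbove_last]
      have hk : (N.succAbove k : Fin (n+1)) = k.castSucc := by rw [hN, Fin.succAbove_last]
      simp only [Matrix.submatrix_apply, hj, hk, Matrix.of_apply, hN, Fin.succAbove_last,
        if_neg (Fin.castSucc_lt_last j).ne, if_neg (Fin.castSucc_lt_last k).ne]
    · intro b _ hb
      simp [if_neg hb]
    · simp
  -- Step 3 : factor the small matrix
  have step3 : Matrix.det (Matrix.of fun j k : Fin n =>
        Complex.sinh (z N - z j.castSucc) *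
          ((Complex.sinh (z j.castSucc - lam k.castSucc))⁻¹ *
            (Complex.sinh (z N - lam k.castSucc))⁻¹)) =
      (∏ j : Fin n, Complex.sinh (z N - z j.castSucc)) *
        ((∏ k : Fin n, (Complex.sinh (z N - lam k.castSucc))⁻¹) *
          Matrix.det (Matrix.of fun j k : Fin n =>
            (Complex.sinh (z j.castSucc - lam k.castSucc))⁻¹)) := by
    have e3 : (Matrix.of fun j k : Fin n =>
        Complex.sinh (z N - z j.castSucc) *
          ((Complex.sinh (z j.castSucc - lam k.castSucc))⁻¹ *
            (Complex.sinh (z N - lam k.castSucc))⁻¹)) =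
        Matrix.of (fun j k => Complex.sinh (z N - z j.castSucc) *
          (Matrix.of (fun j k : Fin n => (Complex.sinh (z N - lam k.castSucc))⁻¹ *
            (Matrix.of (fun j k : Fin n =>
              (Complex.sinh (z j.castSucc - lam k.castSucc))⁻¹)) j k) j k)) := by
      ext j k
      simp only [Matrix.of_apply]
      ring
    rw [e3, Matrix.det_mul_column, Matrix.det_mul_row]
  have step4 := sinh_cauchy_det n (fun j => z j.castSucc) (fun k => lam k.castSucc)
    (fun j k => hzlam j.castSucc k.castSucc)
  rw [step0, step1, step2, step3, step4]
  -- notation for the atomic products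
  have hCp : (∏ j, C j) = (∏ j, ∏ a, Complex.sinh (z j - lam a)) /
      ∏ j, ∏ a ∈ Finset.univ.erase j, Complex.sinh (z j - z a) := by
    rw [hC]; exact Finset.prod_div_distrib _ _
  have hF : (∏ j, ∏ a, Complex.sinh (z j - lam a)) =
      ((∏ j : Fin n, ∏ a : Fin n, Complex.sinh (z j.castSucc - lam a.castSucc)) *
          (∏ j : Fin n, Complex.sinh (z j.castSucc - lam N))) *
        ((∏ a : Fin n, Complex.sinh (z N - lam a.castSucc)) *
          Complex.sinh (z N - lam N)) := by
    rw [Fin.prod_univ_castSucc (f := fun j => ∏ a, Complex.sinh (z j - lam a)), ← hN]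
    congr 1
    · rw [← Finset.prod_mul_distrib]
      exact Finset.prod_congr rfl fun j _ => by rw [Fin.prod_univ_castSucc, ← hN]
    · rw [Fin.prod_univ_castSucc, ← hN]
  have hZZ : (∏ j, ∏ a ∈ Finset.univ.erase j, Complex.sinh (z j - z a)) =
      ((∏ a : Fin n, ∏ b ∈ Iio a, Complex.sinh (z a.castSucc - z b.castSucc)) *
          (∏ a : Fin n, ∏ b ∈ Iio a, Complex.sinh (z b.castSucc - z a.castSucc))) *
        ((∏ b : Fin n, Complex.sinh (z N - z b.castSucc)) *
          (∏ b : Fin n, Complex.sinh (z b.castSucc - z N))) := by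
    rw [prod_erase_pairs (n+1) (fun j a => Complex.sinh (z j - z a)),
      prodPairs_castSucc n (fun a b => Complex.sinh (z a - z b) * Complex.sinh (z b - z a)),
      ← hN]
    simp only [Finset.prod_mul_distrib]
  have hsplit : (∏ a : Fin n, ∏ b ∈ Iio a,
        (Complex.sinh (z a.castSucc - z b.castSucc) *
          Complex.sinh (lam b.castSucc - lam a.castSucc))) =
      (∏ a : Fin n, ∏ b ∈ Iio a, Complex.sinh (z a.castSucc - z b.castSucc)) *
        (∏ a : Fin n, ∏ b ∈ Iio a, Complex.sinh (lam b.castSucc - lam a.castSucc)) := by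
    simp only [Finset.prod_mul_distrib]
  have hT : (∏ a, Complex.sinh (z a - lam N)) =
      (∏ j : Fin n, Complex.sinh (z j.castSucc - lam N)) * Complex.sinh (z N - lam N) := by
    rw [Fin.prod_univ_castSucc, ← hN]
  have hLam : (∏ a ∈ Finset.univ.erase N, Complex.sinh (lam a - lam N)) =
      ∏ b : Fin n, Complex.sinh (lam b.castSucc - lam N) := by
    rw [hN]
    exact prod_erase_last n _
  have hRpairs : (∏ a : Fin (n+1), ∏ b ∈ Finset.Iio a,
        (Complex.sinh (lam a - lam b) / Complex.sinh (z a - z b))) =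
      ((∏ a : Fin n, ∏ b ∈ Iio a, Complex.sinh (lam a.castSucc - lam b.castSucc)) /
          (∏ a : Fin n, ∏ b ∈ Iio a, Complex.sinh (z a.castSucc - z b.castSucc))) *
        ((∏ b : Fin n, Complex.sinh (lam N - lam b.castSucc)) /
          (∏ b : Fin n, Complex.sinh (z N - z b.castSucc))) := by
    rw [prodPairs_castSucc n
      (fun a b => Complex.sinh (lam a - lam b) / Complex.sinh (z a - z b)), ← hN]
    simp only [Finset.prod_div_distrib]
  rw [hCp, hF, hZZ, hsplit, hT, hLam, hRpairs]
  -- nonvanishing of the atomic products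
  have hne : ∀ (w w' : Fin (n+1) → ℂ), (∀ a b, a ≠ b → Complex.sinh (w a - w' b) ≠ 0) →
      ∀ f g : Fin n → Fin (n+1), (∀ i, f i ≠ g i) →
      (∏ b : Fin n, Complex.sinh (w (f b) - w' (g b))) ≠ 0 := fun w w' hw f g hfg =>
    Finset.prod_ne_zero_iff.mpr fun b _ => hw _ _ (hfg b)
  have hzps : (∏ a : Fin n, ∏ b ∈ Iio a, Complex.sinh (z a.castSucc - z b.castSucc)) ≠ 0 :=
    Finset.prod_ne_zero_iff.mpr fun a _ => Finset.prod_ne_zero_iff.mpr fun b hb =>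
      hz _ _ ((Fin.castSucc_injective n).ne (Finset.mem_Iio.mp hb).ne')
  have hzms : (∏ a : Fin n, ∏ b ∈ Iio a, Complex.sinh (z b.castSucc - z a.castSucc)) ≠ 0 :=
    Finset.prod_ne_zero_iff.mpr fun a _ => Finset.prod_ne_zero_iff.mpr fun b hb =>
      hz _ _ ((Fin.castSucc_injective n).ne (Finset.mem_Iio.mp hb).ne)
  have hlps : (∏ a : Fin n, ∏ b ∈ Iio a, Complex.sinh (lam a.castSucc - lam b.castSucc)) ≠ 0 :=
    Finset.prod_ne_zero_iff.mpr fun a _ => Finset.prod_ne_zero_iff.mpr fun b hb =>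
      hlam _ _ ((Fin.castSucc_injective n).ne (Finset.mem_Iio.mp hb).ne')
  have hlms : (∏ a : Fin n, ∏ b ∈ Iio a, Complex.sinh (lam b.castSucc - lam a.castSucc)) ≠ 0 :=
    Finset.prod_ne_zero_iff.mpr fun a _ => Finset.prod_ne_zero_iff.mpr fun b hb =>
      hlam _ _ ((Fin.castSucc_injective n).ne (Finset.mem_Iio.mp hb).ne)
  have hG : (∏ j : Fin n, ∏ a : Fin n, Complex.sinh (z j.castSucc - lam a.castSucc)) ≠ 0 :=
    Finset.prod_ne_zero_iff.mpr fun j _ => Finset.prod_ne_zero_iff.mpr fun a _ => hzlam _ _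
  have hE1 : (∏ a : Fin n, Complex.sinh (z N - lam a.castSucc)) ≠ 0 :=
    Finset.prod_ne_zero_iff.mpr fun a _ => hzlam _ _
  have hE2 : (∏ b : Fin n, Complex.sinh (z N - z b.castSucc)) ≠ 0 :=
    Finset.prod_ne_zero_iff.mpr fun b _ => hz _ _ (Fin.castSucc_lt_last b).ne'
  have hE2m : (∏ b : Fin n, Complex.sinh (z b.castSucc - z N)) ≠ 0 :=
    Finset.prod_ne_zero_iff.mpr fun b _ => hz _ _ (Fin.castSucc_lt_last b).ne
  have hLm1 : (∏ b : Fin n, Complex.sinh (lam b.castSucc - lam N)) ≠ 0 :=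
    Finset.prod_ne_zero_iff.mpr fun b _ => hlam _ _ (Fin.castSucc_lt_last b).ne
  have hLN : (∏ b : Fin n, Complex.sinh (lam N - lam b.castSucc)) ≠ 0 :=
    Finset.prod_ne_zero_iff.mpr fun b _ => hlam _ _ (Fin.castSucc_lt_last b).ne'
  have hTc : (∏ j : Fin n, Complex.sinh (z j.castSucc - lam N)) ≠ 0 :=
    Finset.prod_ne_zero_iff.mpr fun j _ => hzlam _ _
  have htNN : Complex.sinh (z N - lam N) ≠ 0 := hzlam _ _
  -- the two sign identities
  have hsign1 : (∏ a : Fin n, ∏ b ∈ Iio a, Complex.sinh (lam b.castSucc - lam a.castSucc)) *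
      (∏ a : Fin n, ∏ b ∈ Iio a, Complex.sinh (z a.castSucc - z b.castSucc)) =
      (∏ a : Fin n, ∏ b ∈ Iio a, Complex.sinh (lam a.castSucc - lam b.castSucc)) *
        (∏ a : Fin n, ∏ b ∈ Iio a, Complex.sinh (z b.castSucc - z a.castSucc)) := by
    rw [← Finset.prod_mul_distrib, ← Finset.prod_mul_distrib]
    refine Finset.prod_congr rfl fun a _ => ?_
    rw [← Finset.prod_mul_distrib, ← Finset.prod_mul_distrib]
    refine Finset.prod_congr rfl fun b _ => ?_
    rw [show lam b.castSucc - lam a.castSucc = -(lam a.castSucc - lam b.castSucc) by ring,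
      show z a.castSucc - z b.castSucc = -(z b.castSucc - z a.castSucc) by ring,
      Complex.sinh_neg, Complex.sinh_neg]
    ring
  have hsign2 : (∏ b : Fin n, Complex.sinh (lam b.castSucc - lam N)) *
      (∏ b : Fin n, Complex.sinh (z N - z b.castSucc)) =
      (∏ b : Fin n, Complex.sinh (lam N - lam b.castSucc)) *
        (∏ b : Fin n, Complex.sinh (z b.castSucc - z N)) := by
    rw [← Finset.prod_mul_distrib, ← Finset.prod_mul_distrib]
    refine Finset.prod_congr rfl fun b _ => ?_
    rw [show lam b.castSucc - lam N = -(lam N - lam b.castSucc) by ring,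
      show z N - z b.castSucc = -(z b.castSucc - z N) by ring,
      Complex.sinh_neg, Complex.sinh_neg]
    ring
  have hlms_eq : (∏ a : Fin n, ∏ b ∈ Iio a, Complex.sinh (lam b.castSucc - lam a.castSucc)) =
      (∏ a : Fin n, ∏ b ∈ Iio a, Complex.sinh (lam a.castSucc - lam b.castSucc)) *
        (∏ a : Fin n, ∏ b ∈ Iio a, Complex.sinh (z b.castSucc - z a.castSucc)) /
        (∏ a : Fin n, ∏ b ∈ Iio a, Complex.sinh (z a.castSucc - z b.castSucc)) := by
    rw [eq_div_iff hzps]; exact hsign1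
  have hLm1_eq : (∏ b : Fin n, Complex.sinh (lam b.castSucc - lam N)) =
      (∏ b : Fin n, Complex.sinh (lam N - lam b.castSucc)) *
        (∏ b : Fin n, Complex.sinh (z b.castSucc - z N)) /
        (∏ b : Fin n, Complex.sinh (z N - z b.castSucc)) := by
    rw [eq_div_iff hE2]; exact hsign2
  rw [hlms_eq, hLm1_eq]
  simp only [Finset.prod_inv_distrib]
  field_simp
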